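/- Let (A, ∘, ρ, ⟨·,·⟩) be a Courant algebroid (in its Leibniz formulation) and N : A → A a (1,1)-tensor with adjoint N* defined by ⟨NX, Y⟩ = ⟨X, N*Y⟩; set Δ = N + N*. Then the invariance identity ρ(NX)⟨Y,Z⟩ = ⟨X∘_N Y, Z⟩ + ⟨Y, X∘_N Z⟩ holds for all X, Y, Z if and only if Δ commutes with left multiplication: X∘ΔZ = Δ(X∘Z) for all X, Z. -/
import Mathlib


/-- For a Courant algebroid `(A, ∘, ρ, ⟨·,·⟩)` and a
(1,1)-tensor `N` with adjoint `N*` (so `Δ = N + N*`), the invariance identity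
`ρ(NX)⟨Y,Z⟩ = ⟨X∘_N Y, Z⟩ + ⟨Y, X∘_N Z⟩` holds for all `X, Y, Z` if and only
if `Δ` commutes with left multiplication: `X∘ΔZ = Δ(X∘Z)`. -/
theorem contracted_invariance_iff_delta_commutes
    {A F : Type*} [AddCommGroup A] [Module ℝ A] [AddCommGroup F] [Module ℝ F]
    (m : A →ₗ[ℝ] A →ₗ[ℝ] A)           -- the Leibniz product ∘
    (B : A →ₗ[ℝ] A →ₗ[ℝ] F)           -- the pairing ⟨·,·⟩
    (ρ : A →ₗ[ℝ] F →ₗ[ℝ] F)           -- the anchor acting on scalars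
    (jacobi : ∀ X Y Z : A, m (m X Y) Z = m X (m Y Z) - m Y (m X Z))
    (hsym : ∀ X Y : A, B X Y = B Y X)
    (hnondeg : ∀ a : A, (∀ b : A, B a b = 0) → a = 0)
    (h4 : ∀ X Y : A, ρ X (B Y Y) = (2 : ℝ) • B X (m Y Y))
    (h5 : ∀ X Y : A, ρ X (B Y Y) = (2 : ℝ) • B (m X Y) Y)
    (h6 : ∀ X Y Z : A, ρ X (B Y Z) = B (m X Y) Z + B Y (m X Z))
    (N Ns : A →ₗ[ℝ] A)
    (hadj : ∀ X Y : A, B (N X) Y = B X (Ns Y))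
    (cN : A → A → A)
    (hcN : ∀ X Y : A, cN X Y = m (N X) Y + m X (N Y) - N (m X Y)) :
    (∀ X Y Z : A, ρ (N X) (B Y Z) = B (cN X Y) Z + B Y (cN X Z)) ↔
    (∀ X Z : A, m X (N Z + Ns Z) = N (m X Z) + Ns (m X Z)) := by

  have key : ∀ X Y Z : A, B (cN X Y) Z + B Y (cN X Z) =
      ρ (N X) (B Y Z) + B Y (m X (N Z + Ns Z) - (N (m X Z) + Ns (m X Z))) := by
    intro X Y Z
    have e1 : B (m X (N Y)) Z = ρ X (B Y (Ns Z)) - B Y (Ns (m X Z)) := by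
      have := h6 X (N Y) Z
      rw [hadj Y Z, hadj Y (m X Z)] at this
      rw [this]; abel
    have e2 : B (N (m X Y)) Z = ρ X (B Y (Ns Z)) - B Y (m X (Ns Z)) := by
      have := h6 X Y (Ns Z)
      rw [hadj (m X Y) Z, this]; abel
    rw [hcN, hcN]
    simp only [map_add, map_sub, LinearMap.add_apply, LinearMap.sub_apply]
    rw [h6 (N X) Y Z, e1, e2]
    abel
  constructor
  · intro hinv X Z
    have hz : ∀ Y : A, B Y (m X (N Z + Ns Z) - (N (m X Z) + Ns (m X Z))) = 0 := by
      intro Y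
      have h := key X Y Z
      rw [← hinv X Y Z] at h
      exact (left_eq_add.mp h)
    have h0 := hnondeg (m X (N Z + Ns Z) - (N (m X Z) + Ns (m X Z)))
      (fun b => by rw [hsym]; exact hz b)
    exact sub_eq_zero.mp h0
  · intro hΔ X Y Z
    have h := key X Y Z
    rw [hΔ X Z, sub_self, map_zero, add_zero] at h
    exact h.symm
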